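/- Let P be a field and n ≥ 1, and let A = P[x_1,…,x_n] be the polynomial algebra in n variables over P. If μ : A → A is a bijection that commutes with every P-algebra endomorphism of A (i.e., μ ∘ s = s ∘ μ for all s ∈ End(A)), then μ is linear: there exist a, b ∈ P with a ≠ 0 such that μ(u) = a·u + b for every u ∈ A (where b is identified with the constant polynomial b). In other words, the free finitely generated commutative algebra A is almost central. -/
import Mathlib


/-- The free finitely generated commutative algebra P[x_1,…,x_n]
is almost central: every bijection commuting with all P-algebra endomorphisms
is linear, `u ↦ a·u + b` with `a ≠ 0`. -/
theorem almost_central {P : Type*} [Field P] (n : ℕ) (hn : 1 ≤ n)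
    (μ : MvPolynomial (Fin n) P → MvPolynomial (Fin n) P)
    (hbij : Function.Bijective μ)
    (hcomm : ∀ s : MvPolynomial (Fin n) P →ₐ[P] MvPolynomial (Fin n) P,
      μ ∘ ⇑s = ⇑s ∘ μ) :
    ∃ a b : P, a ≠ 0 ∧
      ∀ u : MvPolynomial (Fin n) P,
        μ u = MvPolynomial.C a * u + MvPolynomial.C b := by
  set i0 : Fin n := ⟨0, hn⟩ with hi0
  set q : MvPolynomial (Fin n) P := μ (MvPolynomial.X i0) with hq
  set f : Polynomial P := MvPolynomial.aeval (fun _ => Polynomial.X) q with hf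
  -- key: μ u = aeval u f for all u
  have key : ∀ u, μ u = Polynomial.aeval u f := by
    intro u
    set s : MvPolynomial (Fin n) P →ₐ[P] MvPolynomial (Fin n) P :=
      MvPolynomial.aeval fun _ => u with hs
    have h1 : μ (s (MvPolynomial.X i0)) = s q := by
      have := congrFun (hcomm s) (MvPolynomial.X i0)
      simpa using this
    have hX : s (MvPolynomial.X i0) = u := by rw [hs, MvPolynomial.aeval_X]
    rw [hX] at h1
    rw [h1, hf]
    have h2 : (Polynomial.aeval u).comp (MvPolynomial.aeval fun _ : Fin n => Polynomial.X)
        = s := by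
      rw [hs, MvPolynomial.comp_aeval]
      congr 1
      funext i
      simp
    calc s q
        = ((Polynomial.aeval u).comp (MvPolynomial.aeval fun _ : Fin n => Polynomial.X)) q := by
          rw [h2]
      _ = Polynomial.aeval u (MvPolynomial.aeval (fun _ => Polynomial.X) q) := rfl
  -- surjectivity: ∃ u, aeval u f = X i0
  obtain ⟨u, hu⟩ := hbij.2 (MvPolynomial.X i0)
  rw [key] at hu
  -- project to Polynomial P
  set π : MvPolynomial (Fin n) P →ₐ[P] Polynomial P :=
    MvPolynomial.aeval (fun _ => Polynomial.X) with hπ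
  have hproj : Polynomial.aeval (π u) f = Polynomial.X := by
    have := congrArg π hu
    rwa [← Polynomial.aeval_algHom_apply, hπ, MvPolynomial.aeval_X] at this
  have hcomp : f.comp (π u) = Polynomial.X := by
    rwa [Polynomial.comp_eq_aeval]
  have hdeg : f.natDegree * (π u).natDegree = 1 := by
    have := congrArg Polynomial.natDegree hcomp
    rwa [Polynomial.natDegree_comp, Polynomial.natDegree_X] at this
  have hf1 : f.natDegree = 1 := Nat.dvd_one.mp ⟨_, hdeg.symm⟩
  have hfne : f ≠ 0 := fun h => by simp [h] at hf1
  have ha : f.coeff 1 ≠ 0 := by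
    have := Polynomial.leadingCoeff_ne_zero.mpr hfne
    rwa [Polynomial.leadingCoeff, hf1] at this
  refine ⟨f.coeff 1, f.coeff 0, ha, fun u => ?_⟩
  rw [key u, Polynomial.eq_X_add_C_of_natDegree_le_one hf1.le]
  simp [MvPolynomial.algebraMap_eq]
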